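/- Let f ∈ C(𝕋^{n-1}) have Fourier coefficients f_k and suppose ∑_k (1+|k|)^s |f_k| < ∞ with f_0 = 0, and let ω be (κ,τ)-Diophantine with s ≥ τ. Define u_k = f_k / (1 - e^{2πi⟨k,ω⟩}) for k ≠ 0 and u_0 = 0. Then |u_k| ≤ (1/(4κ))(1+|k|)^τ |f_k| for all k, and the series ∑_k u_k e^{i⟨k,φ⟩} converges absolutely and uniformly to a continuous function u with ∑_k (1+|k|)^{s-τ}|u_k| ≤ (1/(4κ)) ∑_k (1+|k|)^s |f_k|. -/

import Mathlib

open Filter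
open scoped Real BigOperators Topology

lemma norm_one_sub_exp' (x : ℝ) :
    ‖(1:ℂ) - Complex.exp ((x:ℂ) * Complex.I)‖ = 2 * |Real.sin (x/2)| := by
  have hxx : ((x:ℂ)) * Complex.I = ((x/2:ℝ):ℂ) * Complex.I + ((x/2:ℝ):ℂ) * Complex.I := by
    push_cast; ring
  have h1 : Complex.exp (-((x/2:ℝ):ℂ) * Complex.I) * Complex.exp (((x/2:ℝ):ℂ) * Complex.I) = 1 := by
    rw [← Complex.exp_add]; ring_nf; exact Complex.exp_zero
  have h : (1:ℂ) - Complex.exp ((x:ℂ) * Complex.I)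
      = Complex.exp (((x/2:ℝ):ℂ) * Complex.I) * (-2 * Complex.sin ((x/2:ℝ):ℂ)) * Complex.I := by
    rw [hxx, Complex.exp_add, Complex.sin]
    linear_combination (-1) * h1 + (Complex.exp (((x/2:ℝ):ℂ) * Complex.I) *
      (Complex.exp (-((x/2:ℝ):ℂ) * Complex.I) - Complex.exp (((x/2:ℝ):ℂ) * Complex.I))) * Complex.I_sq
  rw [h, norm_mul, norm_mul,
    show (Complex.sin ((x/2:ℝ):ℂ)) = ((Real.sin (x/2) : ℝ) : ℂ) by rw [Complex.ofReal_sin]]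
  rw [Complex.norm_exp_ofReal_mul_I, Complex.norm_I]
  simp [abs_mul]
  rw [show ((x:ℂ)/2) = ((x/2:ℝ):ℂ) by push_cast; ring, ← Complex.ofReal_sin, Complex.norm_real,
    Real.norm_eq_abs]

lemma four_dist_le_sin' (θ : ℝ) :
    4 * |θ - round θ| ≤ 2 * |Real.sin (Real.pi * θ)| := by
  set m := round θ with hm
  have hε : |θ - (m:ℝ)| ≤ 1/2 := abs_sub_round θ
  have h1 : Real.sin (Real.pi * θ) = (-1)^m * Real.sin (Real.pi * (θ - m)) := by
    have := Real.sin_add_int_mul_pi (Real.pi * (θ - m)) m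
    rw [← this]; ring_nf
  have h2 : |Real.sin (Real.pi * θ)| = |Real.sin (Real.pi * (θ - m))| := by
    have hone : |((-1:ℝ)) ^ m| = 1 := by
      rcases Int.even_or_odd m with h | h
      · rw [h.neg_one_zpow, abs_one]
      · rw [h.neg_one_zpow, abs_neg, abs_one]
    rw [h1, abs_mul, hone, one_mul]
  rw [h2]
  set ε := θ - (m:ℝ)
  have key : ∀ δ : ℝ, 0 ≤ δ → δ ≤ 1/2 → 2 * δ ≤ Real.sin (Real.pi * δ) := by
    intro δ h0 h12
    have := Real.mul_le_sin (x := Real.pi * δ) (by positivity)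
      (by nlinarith [Real.pi_pos])
    have hπ := Real.pi_pos
    calc 2 * δ = 2 / Real.pi * (Real.pi * δ) := by field_simp
    _ ≤ Real.sin (Real.pi * δ) := this
  rcases le_or_gt 0 ε with h0 | h0
  · have := key ε h0 (by rwa [abs_of_nonneg h0] at hε)
    have h3 := le_abs_self (Real.sin (Real.pi * ε))
    rw [abs_of_nonneg h0]
    linarith
  · have := key (-ε) (by linarith) (by rw [abs_of_neg h0] at hε; linarith)
    rw [show Real.pi * -ε = -(Real.pi * ε) by ring, Real.sin_neg] at this
    have h3 := neg_le_abs (Real.sin (Real.pi * ε))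
    rw [abs_of_neg h0]
    linarith

/-- The `(κ,τ)`-Diophantine condition. -/
def IsDiophantine (m : ℕ) (ω : Fin m → ℝ) (κ τ : ℝ) : Prop :=
  ∀ (k : Fin m → ℤ) (kn : ℤ), k ≠ 0 →
    κ * (∑ j, |(k j : ℝ)|) ^ (-τ) ≤ |∑ j, ω j * (k j : ℝ) + (kn : ℝ)|

/-- quantitative solution of the homological equation on the Fourier
side.  If `∑ (1+|k|)^s |c_k| < ∞`, `c_0 = 0`, `ω` is `(κ,τ)`-Diophantine and `s ≥ τ`,
then the coefficients `u_k = c_k/(1 - e^{2πi⟨k,ω⟩})` satisfy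
`|u_k| ≤ (1+|k|)^τ |c_k|/(4κ)`, the weighted series of the `u_k` converges with
`∑(1+|k|)^{s-τ}|u_k| ≤ (4κ)⁻¹ ∑(1+|k|)^s|c_k|`, and the Fourier series
`∑ u_k e^{i⟨k,φ⟩}` converges absolutely and uniformly to a continuous function. -/
theorem small_divisor_series (n : ℕ) (hn : 2 ≤ n) (ω : Fin (n - 1) → ℝ) (κ τ s : ℝ)
    (hκ : 0 < κ) (hτ : (n : ℝ) - 1 < τ) (hs : τ ≤ s)
    (hdio : IsDiophantine (n - 1) ω κ τ)
    (c : (Fin (n - 1) → ℤ) → ℂ)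
    (hsum : Summable fun k : Fin (n - 1) → ℤ => (1 + ∑ j, |(k j : ℝ)|) ^ s * ‖c k‖)
    (hc0 : c 0 = 0)
    (u : (Fin (n - 1) → ℤ) → ℂ) (hu0 : u 0 = 0)
    (huk : ∀ k : Fin (n - 1) → ℤ, k ≠ 0 →
      u k = c k / (1 - Complex.exp (2 * (Real.pi : ℂ) * Complex.I *
        ∑ j, (k j : ℂ) * (ω j : ℂ)))) :
    (∀ k : Fin (n - 1) → ℤ,
      ‖u k‖ ≤ (4 * κ)⁻¹ * (1 + ∑ j, |(k j : ℝ)|) ^ τ * ‖c k‖) ∧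
    (Summable fun k : Fin (n - 1) → ℤ => (1 + ∑ j, |(k j : ℝ)|) ^ (s - τ) * ‖u k‖) ∧
    (∑' k : Fin (n - 1) → ℤ, (1 + ∑ j, |(k j : ℝ)|) ^ (s - τ) * ‖u k‖) ≤
      (4 * κ)⁻¹ * ∑' k : Fin (n - 1) → ℤ, (1 + ∑ j, |(k j : ℝ)|) ^ s * ‖c k‖ ∧
    ∃ U : (Fin (n - 1) → ℝ) → ℂ, Continuous U ∧
      TendstoUniformly (fun (S : Finset (Fin (n - 1) → ℤ)) (φ : Fin (n - 1) → ℝ) =>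
        ∑ k ∈ S, u k * Complex.exp (Complex.I * ∑ j, (k j : ℂ) * (φ j : ℂ)))
        U atTop ∧
      ∀ φ : Fin (n - 1) → ℝ,
        HasSum (fun k : Fin (n - 1) → ℤ =>
          u k * Complex.exp (Complex.I * ∑ j, (k j : ℂ) * (φ j : ℂ))) (U φ) := by
  have hτ0 : 0 < τ := by
    have : (1:ℝ) ≤ (n:ℝ) - 1 := by
      have : (2:ℝ) ≤ (n:ℝ) := by exact_mod_cast hn
      linarith
    linarith
  set B : (Fin (n - 1) → ℤ) → ℝ := fun k => 1 + ∑ j, |(k j : ℝ)| with hB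
  have hB1 : ∀ k, 1 ≤ B k := by
    intro k
    have : (0:ℝ) ≤ ∑ j, |(k j : ℝ)| := Finset.sum_nonneg fun j _ => abs_nonneg _
    simp only [hB]; linarith
  have hBpos : ∀ k, 0 < B k := fun k => lt_of_lt_of_le one_pos (hB1 k)
  -- claim 1
  have claim1 : ∀ k : Fin (n - 1) → ℤ,
      ‖u k‖ ≤ (4 * κ)⁻¹ * (B k) ^ τ * ‖c k‖ := by
    intro k
    by_cases hk : k = 0
    · subst hk; simp [hu0, hc0]
    · set θ : ℝ := ∑ j, ω j * (k j : ℝ) with hθ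
      have hcast : (2 * (Real.pi : ℂ) * Complex.I * ∑ j, (k j : ℂ) * (ω j : ℂ))
          = ((2 * Real.pi * θ : ℝ) : ℂ) * Complex.I := by
        have hsumc : (∑ j, (k j:ℂ)*(ω j:ℂ)) = ((θ:ℝ):ℂ) := by
          rw [hθ]; push_cast
          exact Finset.sum_congr rfl fun j _ => mul_comm _ _
        rw [hsumc]; push_cast; ring
      have hpos : 0 < ∑ j, |(k j : ℝ)| := by
        obtain ⟨j, hj⟩ := Function.ne_iff.mp hk
        refine Finset.sum_pos' (fun i _ => abs_nonneg _) ⟨j, Finset.mem_univ j, ?_⟩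
        have h1 : (1:ℝ) ≤ |(k j : ℝ)| := by
          rw [← Int.cast_abs]
          exact_mod_cast Int.one_le_abs (by simpa using hj)
        linarith
      have hmono : (B k) ^ (-τ) ≤ (∑ j, |(k j : ℝ)|) ^ (-τ) :=
        Real.rpow_le_rpow_of_nonpos hpos (by simp only [hB]; linarith) (neg_nonpos.2 hτ0.le)
      have hdk : κ * (∑ j, |(k j:ℝ)|)^(-τ) ≤ |θ - round θ| := by
        have h := hdio k (-(round θ)) hk
        rw [← hθ] at h
        push_cast at h
        rw [← sub_eq_add_neg] at h
        exact h
      have hnorm : 4 * κ * (B k) ^ (-τ) ≤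
          ‖(1:ℂ) - Complex.exp (2 * (Real.pi : ℂ) * Complex.I *
            ∑ j, (k j : ℂ) * (ω j : ℂ))‖ := by
        rw [hcast, norm_one_sub_exp', show 2*Real.pi*θ/2 = Real.pi * θ by ring]
        have h4 := four_dist_le_sin' θ
        have h5 : 4 * κ * (B k) ^ (-τ) ≤ 4 * (κ * (∑ j, |(k j:ℝ)|)^(-τ)) := by
          nlinarith [hmono, hκ, Real.rpow_nonneg (hBpos k).le (-τ)]
        linarith
      rw [huk k hk, norm_div]
      have hDpos : (0:ℝ) < 4 * κ * (B k)^(-τ) := by positivity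
      have h6 := div_le_div_of_nonneg_left (norm_nonneg (c k)) hDpos hnorm
      refine h6.trans (le_of_eq ?_)
      rw [Real.rpow_neg (hBpos k).le]
      have hBτ : (0:ℝ) < B k ^ τ := Real.rpow_pos_of_pos (hBpos k) τ
      field_simp
  -- claim 2 pointwise bound
  have hle : ∀ k : Fin (n - 1) → ℤ,
      (B k) ^ (s - τ) * ‖u k‖ ≤ (4 * κ)⁻¹ * ((B k) ^ s * ‖c k‖) := by
    intro k
    have h1 := mul_le_mul_of_nonneg_left (claim1 k)
      (Real.rpow_nonneg (hBpos k).le (s - τ))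
    refine h1.trans (le_of_eq ?_)
    rw [show (B k) ^ (s-τ) * ((4*κ)⁻¹ * B k ^ τ * ‖c k‖)
        = (4*κ)⁻¹ * ((B k ^ (s-τ) * B k ^ τ) * ‖c k‖) by ring,
      ← Real.rpow_add (hBpos k), sub_add_cancel]
  have hsum2 : Summable fun k : Fin (n-1) → ℤ => (B k) ^ (s - τ) * ‖u k‖ :=
    Summable.of_nonneg_of_le
      (fun k => mul_nonneg (Real.rpow_nonneg (hBpos k).le _) (norm_nonneg _))
      hle (hsum.mul_left _)
  have htsum : (∑' k : Fin (n-1) → ℤ, (B k) ^ (s - τ) * ‖u k‖) ≤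
      (4 * κ)⁻¹ * ∑' k : Fin (n-1) → ℤ, (B k) ^ s * ‖c k‖ := by
    rw [← tsum_mul_left]
    exact Summable.tsum_le_tsum hle hsum2 (hsum.mul_left _)
  have hnu : Summable fun k : Fin (n-1) → ℤ => ‖u k‖ := by
    refine Summable.of_nonneg_of_le (fun k => norm_nonneg _) (fun k => ?_) hsum2
    have h1 : (1:ℝ) ≤ (B k) ^ (s - τ) :=
      Real.one_le_rpow (hB1 k) (sub_nonneg.2 hs)
    nlinarith [norm_nonneg (u k)]
  have hbound : ∀ (k : Fin (n-1) → ℤ) (φ : Fin (n-1) → ℝ),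
      ‖u k * Complex.exp (Complex.I * ∑ j, (k j : ℂ) * (φ j : ℂ))‖ ≤ ‖u k‖ := by
    intro k φ
    have hcast : (∑ j, (k j : ℂ) * (φ j : ℂ)) = (((∑ j, (k j:ℝ) * φ j : ℝ)) : ℂ) := by
      push_cast; ring
    rw [norm_mul, hcast]
    have : ‖Complex.exp (Complex.I * (((∑ j, (k j:ℝ) * φ j : ℝ)) : ℂ))‖ = 1 := by
      rw [Complex.norm_exp]
      simp
    rw [this, mul_one]
  have hcont : ∀ k : Fin (n-1) → ℤ, Continuous fun φ : Fin (n-1) → ℝ =>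
      u k * Complex.exp (Complex.I * ∑ j, (k j : ℂ) * (φ j : ℂ)) := by
    intro k
    refine continuous_const.mul (Complex.continuous_exp.comp (continuous_const.mul ?_))
    exact continuous_finset_sum _ fun j _ =>
      continuous_const.mul (Complex.continuous_ofReal.comp (continuous_apply j))
  refine ⟨claim1, hsum2, htsum, ⟨fun φ => ∑' k, u k *
      Complex.exp (Complex.I * ∑ j, (k j : ℂ) * (φ j : ℂ)), ?_, ?_, ?_⟩⟩
  · exact continuous_tsum hcont hnu hbound
  · exact tendstoUniformly_tsum hnu hbound
  · intro φ
    exact (Summable.of_norm_bounded hnu (fun k => hbound k φ)).hasSum
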